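/- arXiv:1306.1690 — 6 statements merged into one kernel-verified Lean document; each statement's English description precedes it below -/
import Mathlib

section
/- Let f : [0,∞) → [0, 1/2] be a continuous function such that f(t) → 0 as t → ∞, and such that for every a > 0 there exists t(a) ≥ 0 with f(t(a)) ≥ 2^(−a·t(a)). Then for each natural number n ≥ 1 there exists T_n ≥ n such that f(t) ≤ 2·f(T_n) for all t ∈ [T_n − n, ∞). -/
open Filter Set

/-- Auxiliary: a nonnegative continuous function on `[s,∞)` tending to zero
attains its maximum on every tail `[s,∞)` with `s ≥ 0`. -/
lemma tail_max_exists (f : ℝ → ℝ) (hcont : ContinuousOn f (Set.Ici 0))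
    (h0 : ∀ t ∈ Set.Ici (0:ℝ), 0 ≤ f t)
    (hlim : Filter.Tendsto f Filter.atTop (nhds 0))
    (s : ℝ) (hs : 0 ≤ s) : ∃ T, s ≤ T ∧ ∀ t, s ≤ t → f t ≤ f T := by
  by_cases h : ∀ t, s ≤ t → f t ≤ f s
  · exact ⟨s, le_refl s, h⟩
  push_neg at h
  obtain ⟨x, hx, hfx⟩ := h
  have hfxpos : 0 < f x := lt_of_le_of_lt (h0 s hs) hfx
  have hev : ∀ᶠ t in Filter.atTop, f t < f x := hlim.eventually_lt_const hfxpos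
  obtain ⟨B, hB⟩ := Filter.eventually_atTop.mp hev
  have hsub : Set.Ici s ⊆ Set.Ici (0:ℝ) := Set.Ici_subset_Ici.2 hs
  have hc : ∀ᶠ t in Filter.cocompact ℝ ⊓ Filter.principal (Set.Ici s), f t ≤ f x := by
    rw [Filter.eventually_inf_principal]
    apply Filter.mem_cocompact.2
    refine ⟨Set.Icc s B, isCompact_Icc, ?_⟩
    intro t ht
    intro hts
    have : ¬ (s ≤ t ∧ t ≤ B) := by simpa [Set.mem_Icc] using ht
    have htB : B < t := by
      rcases lt_or_ge B t with h' | h'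
      · exact h'
      · exact absurd ⟨hts, h'⟩ this
    exact (hB t htB.le).le
  obtain ⟨T, hT, hmax⟩ := (hcont.mono hsub).exists_isMaxOn' isClosed_Ici hx hc
  exact ⟨T, hT, fun t ht => hmax ht⟩

/-- A continuous function `f : [0,∞) → [0,1/2]` tending to zero at
infinity that does not decay exponentially (for every rate `a > 0` it exceeds
`2^(-a t)` somewhere) admits, for each `n ≥ 1`, a point `T_n ≥ n` such that
`f(t) ≤ 2 f(T_n)` for all `t ∈ [T_n - n, ∞)`. -/
theorem shiffman_assertion_exp (f : ℝ → ℝ)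
    (hcont : ContinuousOn f (Set.Ici 0))
    (hrange : ∀ t ∈ Set.Ici (0:ℝ), f t ∈ Set.Icc (0:ℝ) (1/2))
    (hlim : Filter.Tendsto f Filter.atTop (nhds 0))
    (hnotexp : ∀ a : ℝ, 0 < a → ∃ t : ℝ, 0 ≤ t ∧ (2:ℝ) ^ (-(a * t)) ≤ f t) :
    ∀ n : ℕ, 1 ≤ n → ∃ T : ℝ, (n : ℝ) ≤ T ∧ ∀ t : ℝ, T - n ≤ t → f t ≤ 2 * f T := by
  intro n hn
  by_contra hcon
  push_neg at hcon
  -- hcon : ∀ T, n ≤ T → ∃ t, T - n ≤ t ∧ 2 * f T < f t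
  have h0 : ∀ t ∈ Set.Ici (0:ℝ), 0 ≤ f t := fun t ht => (hrange t ht).1
  have hnpos : (0:ℝ) < n := by exact_mod_cast Nat.pos_of_ne_zero (by omega)
  -- key decay estimate by induction
  have key : ∀ k : ℕ, ∀ t : ℝ, (k : ℝ) * n ≤ t → f t ≤ (1/2) * (1/2)^k := by
    intro k
    induction k with
    | zero =>
      intro t ht
      simp only [Nat.cast_zero, zero_mul] at ht
      simpa using (hrange t ht).2
    | succ k ih =>
      intro t ht
      have hkn : (0:ℝ) ≤ ((k:ℝ)+1) * n := by positivity
      obtain ⟨T, hT, hmax⟩ := tail_max_exists f hcont h0 hlim (((k:ℝ)+1) * n) hkn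
      have hTn : (n:ℝ) ≤ T := le_trans (by nlinarith [Nat.cast_nonneg (α := ℝ) k]) hT
      obtain ⟨u, hu, hfu⟩ := hcon T hTn
      have huk : (k:ℝ) * n ≤ u := by
        have : ((k:ℝ)+1) * n - n ≤ u := le_trans (by linarith) hu
        linarith
      have h1 : f u ≤ (1/2) * (1/2)^k := ih u huk
      have h2 : f T ≤ (1/2) * (1/2)^(k+1) := by
        have := lt_of_lt_of_le hfu h1
        rw [pow_succ]
        linarith
      have h3 : f t ≤ f T := by
        apply hmax t
        calc ((k:ℝ)+1) * n ≤ ((k:ℝ)+1) * n := le_refl _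
        _ ≤ t := by push_cast at ht; linarith
      exact le_trans h3 h2
  -- convert to exponential decay
  have decay : ∀ t : ℝ, 0 ≤ t → f t ≤ (2:ℝ) ^ (-(t / n)) := by
    intro t ht
    set k := ⌊t / n⌋₊ with hk
    have hdivnn : 0 ≤ t / n := div_nonneg ht hnpos.le
    have hkt : (k : ℝ) * n ≤ t := by
      have : (k : ℝ) ≤ t / n := Nat.floor_le hdivnn
      calc (k:ℝ) * n ≤ (t/n) * n := by nlinarith
      _ = t := div_mul_cancel₀ t hnpos.ne'
    have h1 : f t ≤ (1/2) * (1/2)^k := key k t hkt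
    have h2 : ((1:ℝ)/2) * (1/2)^k = (2:ℝ) ^ (-((k:ℝ)+1)) := by
      rw [Real.rpow_neg (by norm_num), show ((k:ℝ)+1) = ((k+1:ℕ):ℝ) by push_cast; ring,
        Real.rpow_natCast, pow_succ]
      rw [mul_inv, ← inv_pow]
      norm_num
      ring
    have h3 : (2:ℝ) ^ (-((k:ℝ)+1)) ≤ (2:ℝ) ^ (-(t/n)) := by
      apply Real.rpow_le_rpow_left_iff (by norm_num : (1:ℝ) < 2) |>.2
      have : t / n < (k:ℝ) + 1 := Nat.lt_floor_add_one _
      linarith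
    calc f t ≤ (1/2) * (1/2)^k := h1
    _ = (2:ℝ) ^ (-((k:ℝ)+1)) := h2
    _ ≤ (2:ℝ) ^ (-(t/n)) := h3
  -- contradiction with non-exponential-decay hypothesis
  obtain ⟨t, ht, hge⟩ := hnotexp (1/(2*n)) (by positivity)
  have hle := decay t ht
  have hexp : (2:ℝ) ^ (-(1/(2*(n:ℝ)) * t)) ≤ (2:ℝ) ^ (-(t/n)) := le_trans hge hle
  have hexps : -(1/(2*(n:ℝ)) * t) ≤ -(t/n) :=
    (Real.rpow_le_rpow_left_iff (by norm_num : (1:ℝ) < 2)).1 hexp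
  have h2n : (0:ℝ) < 2*n := by linarith
  have hle' : t / n ≤ t / (2*n) := by
    have heq : t / (2*(n:ℝ)) = 1/(2*(n:ℝ)) * t := by ring
    rw [heq]; linarith
  have ht0 : t = 0 := by
    refine le_antisymm ?_ ht
    by_contra h
    push_neg at h
    have := (div_le_div_iff₀ hnpos h2n).1 hle'
    nlinarith
  rw [ht0] at hge
  have h1 : (2:ℝ) ^ (-(1/(2*(n:ℝ)) * 0)) = 1 := by norm_num
  rw [h1] at hge
  have := (hrange 0 Set.self_mem_Ici).2
  linarith
end

section
/- Let u and y be smooth complex-valued (or real-valued) functions of two variables (z,t) on an open set, with y nowhere vanishing, satisfying the Schrödinger equation y'' + u·y = 0 (prime denoting ∂/∂z) and the evolution equation ∂y/∂t = u'·y − 2u·y'. Then u satisfies the KdV equation ∂u/∂t = −u''' − 6·u·u'. -/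
open Complex

open scoped ContDiff

noncomputable def pd1 (f : ℂ × ℂ → ℂ) (p : ℂ × ℂ) : ℂ := fderiv ℂ f p (1, 0)
noncomputable def pd2 (f : ℂ × ℂ → ℂ) (p : ℂ × ℂ) : ℂ := fderiv ℂ f p (0, 1)

theorem pd1_contDiff {f : ℂ × ℂ → ℂ} (hf : ContDiff ℂ ∞ f) : ContDiff ℂ ∞ (pd1 f) :=
  (hf.fderiv_right (by simp)).clm_apply contDiff_const

theorem pd2_contDiff {f : ℂ × ℂ → ℂ} (hf : ContDiff ℂ ∞ f) : ContDiff ℂ ∞ (pd2 f) :=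
  (hf.fderiv_right (by simp)).clm_apply contDiff_const

theorem hasDeriv_fst {f : ℂ × ℂ → ℂ} (hf : ContDiff ℂ ∞ f) (t z : ℂ) :
    HasDerivAt (fun s => f (s, z)) (pd1 f (t, z)) t := by
  have h1 : HasDerivAt (fun s : ℂ => (s, z)) ((1 : ℂ), (0 : ℂ)) t :=
    (hasDerivAt_id t).prodMk (hasDerivAt_const t z)
  exact (hf.differentiable (by simp) (t, z)).hasFDerivAt.comp_hasDerivAt t h1

theorem hasDeriv_snd {f : ℂ × ℂ → ℂ} (hf : ContDiff ℂ ∞ f) (t z : ℂ) :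
    HasDerivAt (fun w => f (t, w)) (pd2 f (t, z)) z := by
  have h1 : HasDerivAt (fun w : ℂ => (t, w)) ((0 : ℂ), (1 : ℂ)) z :=
    (hasDerivAt_const z t).prodMk (hasDerivAt_id z)
  exact (hf.differentiable (by simp) (t, z)).hasFDerivAt.comp_hasDerivAt z h1

theorem pd_comm {f : ℂ × ℂ → ℂ} (hf : ContDiff ℂ ∞ f) (p : ℂ × ℂ) :
    pd1 (pd2 f) p = pd2 (pd1 f) p := by
  have hd : DifferentiableAt ℂ (fderiv ℂ f) p :=
    ((hf.fderiv_right (n := ∞) (m := ∞) (by simp)).differentiable (by simp)) p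
  have h1 : pd1 (pd2 f) p = fderiv ℂ (fderiv ℂ f) p (1, 0) (0, 1) := by
    unfold pd1 pd2
    rw [fderiv_clm_apply hd (differentiableAt_const _)]
    simp
  have h2 : pd2 (pd1 f) p = fderiv ℂ (fderiv ℂ f) p (0, 1) (1, 0) := by
    unfold pd1 pd2
    rw [fderiv_clm_apply hd (differentiableAt_const _)]
    simp
  rw [h1, h2]
  exact (hf.contDiffAt.isSymmSndFDerivAt (by simp; exact WithTop.coe_le_coe.mpr le_top)) _ _

/-- If `y(z,t)` is nowhere vanishing and satisfies the Schrödinger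
equation `y'' + u y = 0` (primes = ∂/∂z) together with the evolution equation
`∂y/∂t = u' y − 2 u y'`, then the potential `u` satisfies the KdV equation
`∂u/∂t = −u''' − 6 u u'`.  Here `u t z` and `y t z` denote the values at time
`t` and space variable `z`, and both are jointly smooth (holomorphic in the
pair of variables). -/
theorem kdv_compatibility (u y : ℂ → ℂ → ℂ)
    (hu : ContDiff ℂ ⊤ (fun p : ℂ × ℂ => u p.1 p.2))
    (hy : ContDiff ℂ ⊤ (fun p : ℂ × ℂ => y p.1 p.2))
    (hynz : ∀ t z, y t z ≠ 0)
    (hschr : ∀ t z, deriv (deriv (y t)) z + u t z * y t z = 0)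
    (hevol : ∀ t z, deriv (fun s => y s z) t =
      deriv (u t) z * y t z - 2 * u t z * deriv (y t) z) :
    ∀ t z, deriv (fun s => u s z) t =
      -(deriv (deriv (deriv (u t))) z) - 6 * u t z * deriv (u t) z := by
  intro t z
  set U : ℂ × ℂ → ℂ := fun p => u p.1 p.2 with hUdef
  set Y : ℂ × ℂ → ℂ := fun p => y p.1 p.2 with hYdef
  have HU : ContDiff ℂ ∞ U := hu.of_le le_top
  have HY : ContDiff ℂ ∞ Y := hy.of_le le_top
  -- dictionary between 1D derivatives and pd's
  have hY2 : ∀ s w, deriv (y s) w = pd2 Y (s, w) := fun s w => (hasDeriv_snd HY s w).deriv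
  have hY2f : ∀ s, deriv (y s) = fun w => pd2 Y (s, w) := fun s => funext (hY2 s)
  have hY22 : ∀ s w, deriv (deriv (y s)) w = pd2 (pd2 Y) (s, w) := by
    intro s w
    rw [hY2f s]
    exact (hasDeriv_snd (pd2_contDiff HY) s w).deriv
  have hU2 : ∀ s w, deriv (u s) w = pd2 U (s, w) := fun s w => (hasDeriv_snd HU s w).deriv
  -- the Schrödinger equation in pd form
  have hschr' : ∀ s w, pd2 (pd2 Y) (s, w) = -(u s w * y s w) := by
    intro s w
    have h := hschr s w
    rw [hY22 s w] at h
    linear_combination h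
  -- evolution equation in pd form
  have hevolP : ∀ s w, pd1 Y (s, w) = pd2 U (s, w) * y s w - 2 * u s w * pd2 Y (s, w) := by
    intro s w
    have h := hevol s w
    rw [hU2 s w, hY2 s w] at h
    rw [← h]
    exact ((hasDeriv_fst HY s w).deriv).symm
  -- shorthand scalars
  set a : ℂ → ℂ := u t with hadef
  set b : ℂ → ℂ := y t with hbdef
  -- the t-slice of ẏ
  set W : ℂ → ℂ := fun w => pd1 Y (t, w) with hWdef
  -- Step 1: deriv (deriv W) z = pd1 (pd2 (pd2 Y)) (t, z)
  have hW1 : deriv W = fun w => pd1 (pd2 Y) (t, w) := by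
    funext w
    rw [(hasDeriv_snd (pd1_contDiff HY) t w).deriv]
    exact (pd_comm HY (t, w)).symm ▸ rfl
  have hW2 : deriv (deriv W) z = pd1 (pd2 (pd2 Y)) (t, z) := by
    rw [hW1, (hasDeriv_snd (pd1_contDiff (pd2_contDiff HY)) t z).deriv]
    exact (pd_comm (pd2_contDiff HY) (t, z)).symm
  -- Step 2: t-side evaluation
  have dU : HasDerivAt (fun s => u s z) (pd1 U (t, z)) t := hasDeriv_fst HU t z
  have dY : HasDerivAt (fun s => y s z) (pd1 Y (t, z)) t := hasDeriv_fst HY t z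
  have step2 : pd1 (pd2 (pd2 Y)) (t, z) =
      -(pd1 U (t, z) * y t z + u t z * pd1 Y (t, z)) := by
    have e1 : (fun s => pd2 (pd2 Y) (s, z)) = fun s => -(u s z * y s z) :=
      funext fun s => hschr' s z
    have h := (hasDeriv_fst (pd2_contDiff (pd2_contDiff HY)) t z).deriv
    rw [← h, e1]
    exact ((dU.mul dY).neg).deriv
  -- Step 3: z-side 1D computation
  have ca : ContDiff ℂ ∞ a := HU.comp (contDiff_const.prodMk contDiff_id)
  have cb : ContDiff ℂ ∞ b := HY.comp (contDiff_const.prodMk contDiff_id)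
  have ca1 : ContDiff ℂ ∞ (deriv a) := (contDiff_infty_iff_deriv.mp ca).2
  have ca2 : ContDiff ℂ ∞ (deriv (deriv a)) := (contDiff_infty_iff_deriv.mp ca1).2
  have cb1 : ContDiff ℂ ∞ (deriv b) := (contDiff_infty_iff_deriv.mp cb).2
  have cb2 : ContDiff ℂ ∞ (deriv (deriv b)) := (contDiff_infty_iff_deriv.mp cb1).2
  have da : ∀ w, HasDerivAt a (deriv a w) w := fun w =>
    ((ca.differentiable (by simp)) w).hasDerivAt
  have da1 : ∀ w, HasDerivAt (deriv a) (deriv (deriv a) w) w := fun w =>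
    ((ca1.differentiable (by simp)) w).hasDerivAt
  have da2 : ∀ w, HasDerivAt (deriv (deriv a)) (deriv (deriv (deriv a)) w) w := fun w =>
    ((ca2.differentiable (by simp)) w).hasDerivAt
  have db : ∀ w, HasDerivAt b (deriv b w) w := fun w =>
    ((cb.differentiable (by simp)) w).hasDerivAt
  have db1 : ∀ w, HasDerivAt (deriv b) (deriv (deriv b) w) w := fun w =>
    ((cb1.differentiable (by simp)) w).hasDerivAt
  have db2 : ∀ w, HasDerivAt (deriv (deriv b)) (deriv (deriv (deriv b)) w) w := fun w =>
    ((cb2.differentiable (by simp)) w).hasDerivAt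
  -- W as a 1D expression
  have hWexpr : W = fun w => deriv a w * b w - 2 * a w * deriv b w := by
    funext w
    show pd1 Y (t, w) = deriv a w * b w - 2 * a w * deriv b w
    rw [hevolP t w, ← hU2 t w, ← hY2 t w]
  have hW1d : ∀ w, deriv W w =
      (deriv (deriv a) w * b w + deriv a w * deriv b w) -
        (2 * deriv a w * deriv b w + 2 * a w * deriv (deriv b) w) := by
    intro w
    rw [hWexpr]
    exact (((da1 w).mul (db w)).sub (((da w).const_mul 2).mul (db1 w))).deriv
  have hW1df : deriv W = fun w =>
      (deriv (deriv a) w * b w + deriv a w * deriv b w) -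
        (2 * deriv a w * deriv b w + 2 * a w * deriv (deriv b) w) := funext hW1d
  have hW2d : deriv (deriv W) z =
      ((deriv (deriv (deriv a)) z * b z + deriv (deriv a) z * deriv b z) +
        (deriv (deriv a) z * deriv b z + deriv a z * deriv (deriv b) z)) -
      ((2 * deriv (deriv a) z * deriv b z + 2 * deriv a z * deriv (deriv b) z) +
        (2 * deriv a z * deriv (deriv b) z + 2 * a z * deriv (deriv (deriv b)) z)) := by
    rw [hW1df]
    exact ((((da2 z).mul (db z)).add ((da1 z).mul (db1 z))).sub
      ((((da1 z).const_mul 2).mul (db1 z)).add (((da z).const_mul 2).mul (db2 z)))).deriv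
  -- third z-derivative of b via Schrödinger
  have hb2f : deriv (deriv b) = fun w => -(a w * b w) := by
    funext w
    have h := hschr t w
    linear_combination h
  have hb3 : deriv (deriv (deriv b)) z = -(deriv a z * b z + a z * deriv b z) := by
    rw [hb2f]
    exact ((da z).mul (db z)).neg.deriv
  -- collect
  have EQ1 : deriv (deriv W) z = pd1 (pd2 (pd2 Y)) (t, z) := hW2
  have EQ4 : deriv (deriv b) z + a z * b z = 0 := hschr t z
  have EQ3 : pd1 Y (t, z) = deriv a z * b z - 2 * a z * deriv b z := by
    rw [hevolP t z, hU2 t z, hY2 t z]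
  have key : (pd1 U (t, z) + deriv (deriv (deriv a)) z + 6 * a z * deriv a z) * b z = 0 := by
    linear_combination step2 + EQ1 - hW2d - a z * EQ3 + (3 * deriv a z) * EQ4 + (2 * a z) * hb3
  have hzero : pd1 U (t, z) + deriv (deriv (deriv a)) z + 6 * a z * deriv a z = 0 :=
    (mul_eq_zero.mp key).resolve_right (hynz t z)
  rw [dU.deriv]
  linear_combination hzero
end

section
/- Let g and h be complex differentiable functions on an open subset of ℂ with g and g' nowhere vanishing. Then the derivative of the function g·h'/(2g') + h equals (1/g²) times the derivative of g³·h'/(2g'). Equivalently, setting ġ = (g³h'/(2g'))', one has (gh'/(2g') + h)' = ġ/g² and trivially (g³h'/(2g'))' = ġ. -/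
/-- For holomorphic `g, h` on an open set `U ⊆ ℂ` with `g` and
`g'` nowhere vanishing, setting `ġ = (g³h'/(2g'))'` one has
`(g h'/(2g') + h)' = ġ/g²`; i.e. the derivative of `g h'/(2g') + h` equals
`1/g²` times the derivative of `g³ h'/(2g')`. -/
theorem shiffman_primitives (U : Set ℂ) (hU : IsOpen U) (g h : ℂ → ℂ)
    (hg : DifferentiableOn ℂ g U) (hh : DifferentiableOn ℂ h U)
    (hgnz : ∀ z ∈ U, g z ≠ 0) (hg'nz : ∀ z ∈ U, deriv g z ≠ 0) :
    ∀ z ∈ U,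
      deriv (fun w => g w * deriv h w / (2 * deriv g w) + h w) z =
        deriv (fun w => (g w) ^ 3 * deriv h w / (2 * deriv g w)) z / (g z) ^ 2 := by
  intro z hz
  have hmem := hU.mem_nhds hz
  have hgz := hgnz z hz
  have hg'z := hg'nz z hz
  have hAd : DifferentiableAt ℂ (deriv h) z := ((hh.analyticOnNhd hU).deriv z hz).differentiableAt
  have hBd : DifferentiableAt ℂ (deriv g) z := ((hg.analyticOnNhd hU).deriv z hz).differentiableAt
  have hgd : DifferentiableAt ℂ g z := hg.differentiableAt hmem
  have hhd : DifferentiableAt ℂ h z := hh.differentiableAt hmem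
  have hB2 : (2 : ℂ) * deriv g z ≠ 0 := by simp [hg'z]
  have h1 := (((hgd.hasDerivAt.mul hAd.hasDerivAt).div
      (hBd.hasDerivAt.const_mul 2) hB2).add hhd.hasDerivAt)
  have h2 := ((hgd.hasDerivAt.pow 3).mul hAd.hasDerivAt).div
      (hBd.hasDerivAt.const_mul 2) hB2
  rw [show deriv (fun w => g w * deriv h w / (2 * deriv g w) + h w) z = _ from h1.deriv,
    show deriv (fun w => (g w) ^ 3 * deriv h w / (2 * deriv g w)) z = _ from h2.deriv]
  simp only [Pi.mul_apply, Pi.pow_apply]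
  field_simp
  ring
end

section
/- Let g be holomorphic on a neighborhood of 0 in ℂ with g(0) = g'(0) = 0, g''(0) ≠ 0, and g'''(0) = 0, so that g(z) = a·z² + z⁴·f₁(z) with a = g''(0)/2 ≠ 0 and f₁ holomorphic. Then the function u = −(3/4)·(g')²/g² + (1/2)·g''/g, which is meromorphic near 0, has Laurent expansion u(z) = −2/z² + b + z²·f₂(z) for some constant b and some holomorphic function f₂ near 0; in particular u has an order-two pole at 0 with leading coefficient −2 and zero residue, and moreover the coefficient of z in the expansion vanishes. -/
open Filter

open Topology in
private lemma analyticAt_deriv' {f : ℂ → ℂ} {z : ℂ} (hf : AnalyticAt ℂ f z) :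
    AnalyticAt ℂ (deriv f) z := by
  obtain ⟨s, hs, hfs⟩ := eventually_nhds_iff.mp hf.eventually_analyticAt
  exact (AnalyticOnNhd.deriv (fun w hw => hs w hw)) z hfs.2

private lemma analyticAt_dslope_zero' {f : ℂ → ℂ} (hf : AnalyticAt ℂ f 0) :
    AnalyticAt ℂ (dslope f 0) 0 := by
  obtain ⟨p, hp⟩ := hf
  exact ⟨p.fslope, hp.has_fpower_series_dslope_fslope⟩

private lemma dslope_mul_eq' {f : ℂ → ℂ} (hf0 : f 0 = 0) (z : ℂ) :
    f z = z * dslope f 0 z := by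
  have := sub_smul_dslope f 0 z
  rw [sub_zero, hf0, sub_zero, smul_eq_mul] at this
  exact this.symm

/-- Let `g` be holomorphic near `0` with `g(0) = g'(0) = 0`,
`g''(0) ≠ 0` and `g'''(0) = 0` (an order-two zero closing periods).  Then the
Miura potential `u = −(3/4)(g')²/g² + (1/2) g''/g` has Laurent expansion
`u(z) = −2/z² + b + z² f₂(z)` near `0`, with `b` constant and `f₂`
holomorphic; in particular the double pole of `u` at `0` has leading
coefficient `−2`, zero residue, and vanishing coefficient of `z`. -/
theorem miura_potential_expansion_at_order_two_zero (g : ℂ → ℂ)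
    (hg : AnalyticAt ℂ g 0) (h0 : g 0 = 0) (h1 : deriv g 0 = 0)
    (h2 : deriv (deriv g) 0 ≠ 0) (h3 : deriv (deriv (deriv g)) 0 = 0) :
    ∃ (b : ℂ) (f₂ : ℂ → ℂ), AnalyticAt ℂ f₂ 0 ∧
      ∀ᶠ z in nhdsWithin 0 {(0:ℂ)}ᶜ,
        -(3 / 4) * (deriv g z) ^ 2 / (g z) ^ 2
            + (1 / 2) * deriv (deriv g) z / g z
          = -2 / z ^ 2 + b + z ^ 2 * f₂ z := by
  open Topology in
  -- Step 1: factor g z = z ^ 2 * h z with h analytic at 0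
  set h₁ := dslope g 0 with hh₁def
  have hh₁ : AnalyticAt ℂ h₁ 0 := analyticAt_dslope_zero' hg
  have h₁0 : h₁ 0 = 0 := by rw [hh₁def, dslope_same]; exact h1
  set h := dslope h₁ 0 with hhdef
  have hh : AnalyticAt ℂ h 0 := analyticAt_dslope_zero' hh₁
  have hgz : ∀ z, g z = z ^ 2 * h z := by
    intro z
    rw [dslope_mul_eq' h0 z, ← hh₁def, dslope_mul_eq' h₁0 z, ← hhdef]; ring
  have hgfun : g = fun z => z ^ 2 * h z := funext hgz
  have hhe : ∀ᶠ z in 𝓝 (0:ℂ), AnalyticAt ℂ h z := hh.eventually_analyticAt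
  -- Step 2: compute deriv g near 0
  have hd1 : ∀ᶠ z in 𝓝 (0:ℂ), deriv g z = 2 * z * h z + z ^ 2 * deriv h z := by
    filter_upwards [hhe] with z hz
    rw [hgfun, deriv_fun_mul (differentiableAt_pow 2) hz.differentiableAt, deriv_pow_field]
    ring
  have hd2 : ∀ᶠ z in 𝓝 (0:ℂ), deriv (deriv g) z
      = 2 * h z + 4 * z * deriv h z + z ^ 2 * deriv (deriv h) z := by
    have e1 : deriv g =ᶠ[𝓝 (0:ℂ)] fun z => 2 * z * h z + z ^ 2 * deriv h z := hd1
    filter_upwards [e1.deriv, hhe] with z hz1 hz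
    rw [hz1]
    have Hh := hz.differentiableAt
    have Hh' := (analyticAt_deriv' hz).differentiableAt
    rw [deriv_fun_add (by fun_prop) ((differentiableAt_pow 2).fun_mul Hh'),
      deriv_fun_mul (by fun_prop) Hh, deriv_fun_mul (differentiableAt_pow 2) Hh', deriv_pow_field,
      deriv_const_mul _ differentiableAt_fun_id, deriv_id'']
    ring
  have hd3 : ∀ᶠ z in 𝓝 (0:ℂ), deriv (deriv (deriv g)) z
      = 6 * deriv h z + 6 * z * deriv (deriv h) z + z ^ 2 * deriv (deriv (deriv h)) z := by
    have e2 : deriv (deriv g) =ᶠ[𝓝 (0:ℂ)]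
        fun z => 2 * h z + 4 * z * deriv h z + z ^ 2 * deriv (deriv h) z := hd2
    filter_upwards [e2.deriv, hhe] with z hz1 hz
    rw [hz1]
    have Hh := hz.differentiableAt
    have Hh' := (analyticAt_deriv' hz).differentiableAt
    have Hh'' := (analyticAt_deriv' (analyticAt_deriv' hz)).differentiableAt
    rw [deriv_fun_add (by fun_prop) ((differentiableAt_pow 2).fun_mul Hh''),
      deriv_fun_add (by fun_prop) (by fun_prop),
      deriv_const_mul _ Hh,
      deriv_fun_mul (by fun_prop) Hh', deriv_fun_mul (differentiableAt_pow 2) Hh'', deriv_pow_field,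
      deriv_const_mul _ differentiableAt_fun_id, deriv_id'']
    ring
  -- Step 3: h 0 ≠ 0 and deriv h 0 = 0
  have hA : h 0 ≠ 0 := by
    have := hd2.self_of_nhds
    intro hc
    apply h2
    rw [this, hc]; ring
  have hdh0 : deriv h 0 = 0 := by
    have hthis := hd3.self_of_nhds
    rw [h3] at hthis
    have h6 : (6:ℂ) * deriv h 0 = 0 := by linear_combination -hthis
    exact (mul_eq_zero.mp h6).resolve_left (by norm_num)
  -- Step 4: factor deriv h z = z * k z
  set k := dslope (deriv h) 0 with hkdef
  have hk : AnalyticAt ℂ k 0 := analyticAt_dslope_zero' (analyticAt_deriv' hh)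
  have hdk : ∀ z, deriv h z = z * k z := fun z => by
    rw [dslope_mul_eq' hdh0 z, ← hkdef]
  have hke : ∀ᶠ z in 𝓝 (0:ℂ), AnalyticAt ℂ k z := hk.eventually_analyticAt
  -- relations between second/third derivatives of h and k
  have hdhfun : deriv h = fun z => z * k z := funext hdk
  have hdk2 : ∀ᶠ z in 𝓝 (0:ℂ), deriv (deriv h) z = k z + z * deriv k z := by
    filter_upwards [hke] with z hz
    rw [hdhfun, deriv_fun_mul differentiableAt_fun_id hz.differentiableAt, deriv_id'']
    ring
  have hk0 : deriv (deriv h) 0 = k 0 := by simpa using hdk2.self_of_nhds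
  have hk1 : deriv (deriv (deriv h)) 0 = 2 * deriv k 0 := by
    have e : deriv (deriv h) =ᶠ[𝓝 (0:ℂ)] fun z => k z + z * deriv k z := hdk2
    have := e.deriv.self_of_nhds
    rw [this]
    have Hk := hk.differentiableAt
    have Hk' := (analyticAt_deriv' hk).differentiableAt
    rw [deriv_fun_add Hk (differentiableAt_fun_id.fun_mul Hk'),
      deriv_fun_mul differentiableAt_fun_id Hk', deriv_id'']
    simp; ring
  -- Step 5: define φ and compute deriv φ 0 = 0
  set φ : ℂ → ℂ := fun z =>
    -(k z) / h z + (1 / 2) * deriv (deriv h) z / h z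
      - (3 / 4) * (deriv h z) ^ 2 / (h z) ^ 2 with hφdef
  have hφ : AnalyticAt ℂ φ 0 := by
    apply AnalyticAt.sub
    · exact (hk.neg.div hh hA).add
        ((analyticAt_const.mul (analyticAt_deriv' (analyticAt_deriv' hh))).div hh hA)
    · exact (analyticAt_const.mul ((analyticAt_deriv' hh).pow 2)).div (hh.pow 2) (by
        simpa using pow_ne_zero 2 hA)
  have hdφ0 : deriv φ 0 = 0 := by
    have Hh : HasDerivAt h 0 0 := by
      simpa [hdh0] using hh.differentiableAt.hasDerivAt
    have Hk : HasDerivAt k (deriv k 0) 0 := hk.differentiableAt.hasDerivAt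
    have Hh2 : HasDerivAt (deriv h) (deriv (deriv h) 0) 0 :=
      (analyticAt_deriv' hh).differentiableAt.hasDerivAt
    have Hh3 : HasDerivAt (deriv (deriv h)) (2 * deriv k 0) 0 := by
      simpa [hk1] using
        (analyticAt_deriv' (analyticAt_deriv' hh)).differentiableAt.hasDerivAt
    have T1 : HasDerivAt (fun z => -(k z) / h z)
        ((-(deriv k 0) * h 0 - -(k 0) * 0) / h 0 ^ 2) 0 := (Hk.neg.div Hh hA)
    have T2 : HasDerivAt (fun z => (1 / 2 : ℂ) * deriv (deriv h) z / h z)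
        ((1 / 2 * (2 * deriv k 0) * h 0 - 1 / 2 * deriv (deriv h) 0 * 0) / h 0 ^ 2) 0 :=
      ((Hh3.const_mul (1 / 2 : ℂ)).div Hh hA)
    have T3 : HasDerivAt (fun z => (3 / 4 : ℂ) * (deriv h z) ^ 2 / (h z) ^ 2)
        ((3 / 4 * (2 * deriv h 0 ^ 1 * deriv (deriv h) 0) * h 0 ^ 2
          - 3 / 4 * (deriv h 0) ^ 2 * (2 * h 0 ^ 1 * 0)) / (h 0 ^ 2) ^ 2) 0 :=
      ((Hh2.pow 2).const_mul (3 / 4 : ℂ)).div (Hh.pow 2) (pow_ne_zero 2 hA)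
    have := ((T1.add T2).sub T3).deriv
    rw [hφdef]
    rw [show (fun z => -k z / h z + 1 / 2 * deriv (deriv h) z / h z - 3 / 4 * deriv h z ^ 2 / h z ^ 2)
      = ((fun z => -k z / h z) + (fun z => 1 / 2 * deriv (deriv h) z / h z))
        - (fun z => 3 / 4 * deriv h z ^ 2 / h z ^ 2) from rfl]
    rw [this, hdh0]
    field_simp
    ring
  -- Step 6: peel off b and f₂
  set ψ : ℂ → ℂ := fun z => φ z - φ 0 with hψdef
  have hψ : AnalyticAt ℂ ψ 0 := hφ.sub analyticAt_const
  have hψ0 : ψ 0 = 0 := sub_self _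
  set ψ₁ := dslope ψ 0 with hψ₁def
  have hψ₁ : AnalyticAt ℂ ψ₁ 0 := analyticAt_dslope_zero' hψ
  have hψ₁0 : ψ₁ 0 = 0 := by
    rw [hψ₁def, dslope_same, hψdef]
    rw [deriv_sub_const]
    exact hdφ0
  set f₂ := dslope ψ₁ 0 with hf₂def
  have hf₂ : AnalyticAt ℂ f₂ 0 := analyticAt_dslope_zero' hψ₁
  have hφz : ∀ z, φ z = φ 0 + z ^ 2 * f₂ z := by
    intro z
    have : ψ z = z ^ 2 * f₂ z := by
      rw [dslope_mul_eq' hψ0 z, ← hψ₁def, dslope_mul_eq' hψ₁0 z, ← hf₂def]; ring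
    rw [hψdef] at this
    linear_combination this
  -- Step 7: conclude
  refine ⟨φ 0, f₂, hf₂, ?_⟩
  have hne : ∀ᶠ z in 𝓝 (0:ℂ), h z ≠ 0 := hh.continuousAt.eventually_ne hA
  filter_upwards [hd1.filter_mono nhdsWithin_le_nhds, hd2.filter_mono nhdsWithin_le_nhds,
    hne.filter_mono nhdsWithin_le_nhds, eventually_mem_nhdsWithin] with z e1 e2 hhz hz0
  have hz0' : z ≠ 0 := hz0
  rw [e1, e2, hgz z]
  have hstep : -2 / z ^ 2 + φ 0 + z ^ 2 * f₂ z = -2 / z ^ 2 + φ z := by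
    rw [hφz z]; ring
  rw [hstep, hφdef]
  simp only
  rw [hdk z]
  have hz2 : z ^ 2 ≠ 0 := pow_ne_zero 2 hz0'
  have hzh : z ^ 2 * h z ≠ 0 := mul_ne_zero hz2 hhz
  have hzh2 : (z ^ 2 * h z) ^ 2 ≠ 0 := pow_ne_zero 2 hzh
  have hh2 : (h z) ^ 2 ≠ 0 := pow_ne_zero 2 hhz
  rw [div_add_div _ _ hzh2 hzh, div_add_div _ _ hhz hhz,
    div_sub_div _ _ (mul_ne_zero hhz hhz) hh2,
    div_add_div _ _ hz2 (mul_ne_zero (mul_ne_zero hhz hhz) hh2),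
    div_eq_div_iff (mul_ne_zero hzh2 hzh)
      (mul_ne_zero hz2 (mul_ne_zero (mul_ne_zero hhz hhz) hh2))]
  ring
end

section
/- Let u be meromorphic near z₀ ∈ ℂ and let y be meromorphic near z₀ with a pole of order k ≥ 1 at z₀, satisfying y'' + u·y = 0 where both sides are defined. Then u has a pole of order exactly two at z₀ and its Laurent expansion is u(z) = −k(k+1)/(z−z₀)² + (2k·f'(z₀)/f(z₀))·(z−z₀)^{−1} + holomorphic terms, where y(z) = (z−z₀)^{−k}·f(z) with f holomorphic and f(z₀) ≠ 0. In particular, if additionally u(z) = −2/(z−z₀)² + holomorphic(z) near z₀, then k = 1, i.e., every pole of y is simple. -/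
open Filter

private theorem analyticAt_deriv'_s9 {f : ℂ → ℂ} {x : ℂ} (h : AnalyticAt ℂ f x) :
    AnalyticAt ℂ (deriv f) x := by
  obtain ⟨r, hr, hball⟩ := h.exists_ball_analyticOnNhd
  exact hball.deriv x (Metric.mem_ball_self hr)

set_option maxHeartbeats 2000000 in
/-- If `y(z) = f(z)/(z−z₀)^k` has a pole of order `k ≥ 1` at `z₀`
(`f` holomorphic, `f(z₀) ≠ 0`) and `y'' + u y = 0` holds on a punctured
neighborhood of `z₀`, then `u` has a double pole at `z₀` with Laurent
expansion `u(z) = −k(k+1)/(z−z₀)² + (2k f'(z₀)/f(z₀))/(z−z₀) + holomorphic`.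
Moreover, if in addition `u(z) = −2/(z−z₀)² + holomorphic` near `z₀`, then
`k = 1`, i.e. the pole of `y` is simple. -/
theorem schrodinger_pole_order (u f : ℂ → ℂ) (z₀ : ℂ) (k : ℕ) (hk : 1 ≤ k)
    (hf : AnalyticAt ℂ f z₀) (hfnz : f z₀ ≠ 0)
    (hschr : ∀ᶠ z in nhdsWithin z₀ {z₀}ᶜ,
      deriv (deriv (fun w => f w / (w - z₀) ^ k)) z
        + u z * (f z / (z - z₀) ^ k) = 0) :
    (∃ h : ℂ → ℂ, AnalyticAt ℂ h z₀ ∧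
      ∀ᶠ z in nhdsWithin z₀ {z₀}ᶜ,
        u z = -(k * (k + 1) : ℂ) / (z - z₀) ^ 2
          + (2 * k * deriv f z₀ / f z₀) / (z - z₀) + h z) ∧
    ((∃ h₀ : ℂ → ℂ, AnalyticAt ℂ h₀ z₀ ∧
        ∀ᶠ z in nhdsWithin z₀ {z₀}ᶜ, u z = -2 / (z - z₀) ^ 2 + h₀ z) →
      k = 1) := by
  obtain ⟨m, rfl⟩ : ∃ m, k = m + 1 := ⟨k - 1, (Nat.succ_pred_eq_of_pos hk).symm⟩
  set φ : ℂ → ℂ := fun z => deriv f z / f z with hφdef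
  have hφ : AnalyticAt ℂ φ z₀ := (analyticAt_deriv'_s9 hf).div hf hfnz
  have hdsl : AnalyticAt ℂ (dslope φ z₀) z₀ := by
    obtain ⟨p, hp⟩ := hφ
    exact ⟨_, hp.has_fpower_series_dslope_fslope⟩
  set h : ℂ → ℂ := fun z => 2 * ((m : ℂ) + 1) * dslope φ z₀ z - deriv (deriv f) z / f z
    with hhdef
  have hh : AnalyticAt ℂ h z₀ :=
    (analyticAt_const.mul hdsl).sub ((analyticAt_deriv'_s9 (analyticAt_deriv'_s9 hf)).div hf hfnz)
  -- open set where f is analytic, minus z₀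
  set S : Set ℂ := {z | AnalyticAt ℂ f z} ∩ {z₀}ᶜ with hSdef
  have hSopen : IsOpen S := (isOpen_analyticAt ℂ f).inter isOpen_compl_singleton
  set Y₁ : ℂ → ℂ := fun z =>
    deriv f z / (z - z₀) ^ (m + 1) - ((m : ℂ) + 1) * f z / (z - z₀) ^ (m + 2) with hY₁def
  set Y₂ : ℂ → ℂ := fun z =>
    deriv (deriv f) z / (z - z₀) ^ (m + 1)
      - 2 * ((m : ℂ) + 1) * deriv f z / (z - z₀) ^ (m + 2)
      + ((m : ℂ) + 1) * ((m : ℂ) + 2) * f z / (z - z₀) ^ (m + 3) with hY₂def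
  have step1 : ∀ z ∈ S, HasDerivAt (fun w => f w / (w - z₀) ^ (m + 1)) (Y₁ z) z := by
    intro z hz
    have hzne : z - z₀ ≠ 0 := sub_ne_zero.2 hz.2
    have hd : HasDerivAt (fun w => (w - z₀) ^ (m + 1))
        (((m : ℂ) + 1) * (z - z₀) ^ m * 1) z := by
      have := (((hasDerivAt_id z).sub_const z₀).fun_pow (m + 1))
      simpa using this
    have := (hz.1.differentiableAt.hasDerivAt).fun_div hd (pow_ne_zero _ hzne)
    refine this.congr_deriv ?_
    simp only [hY₁def]
    field_simp
    ring
  have step2 : ∀ z ∈ S, HasDerivAt Y₁ (Y₂ z) z := by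
    intro z hz
    have hzne : z - z₀ ≠ 0 := sub_ne_zero.2 hz.2
    have hd1 : HasDerivAt (fun w => (w - z₀) ^ (m + 1))
        (((m : ℂ) + 1) * (z - z₀) ^ m * 1) z := by
      simpa using (((hasDerivAt_id z).sub_const z₀).fun_pow (m + 1))
    have hd2 : HasDerivAt (fun w => (w - z₀) ^ (m + 2))
        (((m : ℂ) + 2) * (z - z₀) ^ (m + 1) * 1) z := by
      simpa using (((hasDerivAt_id z).sub_const z₀).fun_pow (m + 2))
    have t1 := ((analyticAt_deriv'_s9 hz.1).differentiableAt.hasDerivAt).fun_div hd1 (pow_ne_zero _ hzne)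
    have t2 := ((hz.1.differentiableAt.hasDerivAt).fun_div hd2 (pow_ne_zero _ hzne)).const_mul
      ((m : ℂ) + 1)
    have key : HasDerivAt (fun y => deriv f y / (y - z₀) ^ (m + 1)
        - ((m : ℂ) + 1) * (f y / (y - z₀) ^ (m + 2))) (Y₂ z) z := by
      refine (t1.sub t2).congr_deriv ?_
      simp only [hY₂def]
      field_simp
      ring
    exact key.congr_of_eventuallyEq (Filter.Eventually.of_forall fun y => by
      simp only [hY₁def]; ring)
  have hderiv1 : ∀ z ∈ S, deriv (fun w => f w / (w - z₀) ^ (m + 1)) z = Y₁ z :=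
    fun z hz => (step1 z hz).deriv
  have hdd : ∀ z ∈ S, deriv (deriv (fun w => f w / (w - z₀) ^ (m + 1))) z = Y₂ z := by
    intro z hz
    have heq : deriv (fun w => f w / (w - z₀) ^ (m + 1)) =ᶠ[nhds z] Y₁ := by
      filter_upwards [hSopen.mem_nhds hz] with w hw using hderiv1 w hw
    rw [heq.deriv_eq]
    exact (step2 z hz).deriv
  have hSmem : ∀ᶠ z in nhdsWithin z₀ {z₀}ᶜ, z ∈ S := by
    filter_upwards [eventually_nhdsWithin_of_eventually_nhds hf.eventually_analyticAt,
      self_mem_nhdsWithin] with z h1 h2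
    exact ⟨h1, h2⟩
  have hne0 : ∀ᶠ z in nhdsWithin z₀ {z₀}ᶜ, f z ≠ 0 :=
    eventually_nhdsWithin_of_eventually_nhds (hf.continuousAt.eventually_ne hfnz)
  have main : ∀ᶠ z in nhdsWithin z₀ {z₀}ᶜ,
      u z = -((m + 1 : ℕ) * ((m + 1 : ℕ) + 1) : ℂ) / (z - z₀) ^ 2
        + (2 * (m + 1 : ℕ) * deriv f z₀ / f z₀) / (z - z₀) + h z := by
    filter_upwards [hschr, hSmem, hne0, self_mem_nhdsWithin] with z hz hzS hfz hz0
    have hzne : z ≠ z₀ := hz0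
    have hzsub : z - z₀ ≠ 0 := sub_ne_zero.2 hzne
    rw [hdd z hzS] at hz
    have hp1 : ∀ a : ℂ, a / (z - z₀) ^ (m + 1) * (z - z₀) ^ (m + 1) = a :=
      fun a => div_mul_cancel₀ a (pow_ne_zero _ hzsub)
    have hp2 : ∀ a : ℂ, a / (z - z₀) ^ (m + 2) * (z - z₀) ^ (m + 1) = a / (z - z₀) := by
      intro a
      rw [div_mul_eq_mul_div,
        show (z - z₀) ^ (m + 2) = (z - z₀) ^ (m + 1) * (z - z₀) by ring,
        mul_comm a, mul_div_mul_left _ _ (pow_ne_zero _ hzsub)]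
    have hp3 : ∀ a : ℂ, a / (z - z₀) ^ (m + 3) * (z - z₀) ^ (m + 1) = a / (z - z₀) ^ 2 := by
      intro a
      rw [div_mul_eq_mul_div,
        show (z - z₀) ^ (m + 3) = (z - z₀) ^ (m + 1) * (z - z₀) ^ 2 by ring,
        mul_comm a, mul_div_mul_left _ _ (pow_ne_zero _ hzsub)]
    have hY2mul : Y₂ z * (z - z₀) ^ (m + 1)
        = deriv (deriv f) z - 2 * ((m : ℂ) + 1) * deriv f z / (z - z₀)
          + ((m : ℂ) + 1) * ((m : ℂ) + 2) * f z / (z - z₀) ^ 2 := by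
      simp only [hY₂def]
      rw [add_mul, sub_mul, hp1, hp2, hp3]
    have e1 : u z * f z = -(Y₂ z * (z - z₀) ^ (m + 1)) := by
      have h2 : u z * f z / (z - z₀) ^ (m + 1) = -(Y₂ z) :=
        by linear_combination hz
      rw [div_eq_iff (pow_ne_zero _ hzsub)] at h2
      linear_combination h2
    rw [hY2mul] at e1
    simp only [hhdef, dslope_of_ne _ hzne, slope_def_field, hφdef]
    push_cast
    generalize hgt : z - z₀ = t at e1 hzsub ⊢
    have hu : u z = -(deriv (deriv f) z / f z)
        + 2 * ((m : ℂ) + 1) * (deriv f z / f z) / t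
        - ((m : ℂ) + 1) * ((m : ℂ) + 2) / t ^ 2 := by
      refine mul_right_cancel₀ hfz ?_
      rw [e1]
      field_simp
      ring
    rw [hu]
    ring
  refine ⟨⟨h, hh, main⟩, ?_⟩
  rintro ⟨h₀, hh₀, hu0⟩
  have t1 : Tendsto (fun z => (z - z₀) ^ 2 * u z) (nhdsWithin z₀ {z₀}ᶜ)
      (nhds (-((m + 1 : ℕ) * ((m + 1 : ℕ) + 1) : ℂ))) := by
    have cont : Tendsto (fun z => -((m + 1 : ℕ) * ((m + 1 : ℕ) + 1) : ℂ)
        + (z - z₀) * (2 * (m + 1 : ℕ) * deriv f z₀ / f z₀) + (z - z₀) ^ 2 * h z)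
        (nhdsWithin z₀ {z₀}ᶜ) (nhds (-((m + 1 : ℕ) * ((m + 1 : ℕ) + 1) : ℂ))) := by
      have : ContinuousAt (fun z => -((m + 1 : ℕ) * ((m + 1 : ℕ) + 1) : ℂ)
          + (z - z₀) * (2 * (m + 1 : ℕ) * deriv f z₀ / f z₀) + (z - z₀) ^ 2 * h z) z₀ := by
        exact (continuousAt_const.add (((continuousAt_id.sub continuousAt_const)).mul
          continuousAt_const)).add
          (((continuousAt_id.sub continuousAt_const).pow 2).mul hh.continuousAt)
      have h2 := this.tendsto.mono_left (nhdsWithin_le_nhds (s := {z₀}ᶜ))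
      simpa using h2
    refine cont.congr' ?_
    filter_upwards [main, self_mem_nhdsWithin] with z hz hz0
    have hzsub : z - z₀ ≠ 0 := sub_ne_zero.2 hz0
    rw [hz]
    generalize hgt : z - z₀ = t at hzsub ⊢
    field_simp
  have t2 : Tendsto (fun z => (z - z₀) ^ 2 * u z) (nhdsWithin z₀ {z₀}ᶜ)
      (nhds (-2 : ℂ)) := by
    have cont : Tendsto (fun z => (-2 : ℂ) + (z - z₀) ^ 2 * h₀ z)
        (nhdsWithin z₀ {z₀}ᶜ) (nhds (-2 : ℂ)) := by
      have : ContinuousAt (fun z => (-2 : ℂ) + (z - z₀) ^ 2 * h₀ z) z₀ :=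
        continuousAt_const.add (((continuousAt_id.sub continuousAt_const).pow 2).mul
          hh₀.continuousAt)
      have h2 := this.tendsto.mono_left (nhdsWithin_le_nhds (s := {z₀}ᶜ))
      simpa using h2
    refine cont.congr' ?_
    filter_upwards [hu0, self_mem_nhdsWithin] with z hz hz0
    have hzsub : z - z₀ ≠ 0 := sub_ne_zero.2 hz0
    rw [hz]
    generalize hgt : z - z₀ = t at hzsub ⊢
    field_simp
  have heq := tendsto_nhds_unique t1 t2
  have : ((m + 1) * (m + 2) : ℕ) = 2 := by
    have : ((m + 1) * (m + 2) : ℂ) = 2 := by push_cast at heq ⊢; linear_combination -heq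
    exact_mod_cast this
  nlinarith [this]
end

section
/- Let U ⊆ ℂ be a connected open set, let g : U → ℂ be holomorphic and non-constant, and let f₁, f₂ : U → ℂ be holomorphic functions such that f₁(z) + conj(g(z))·f₂(z) = 0 for all z ∈ U. Then f₁ ≡ 0 and f₂ ≡ 0 on U. -/
open Complex

private lemma key_deriv_lemma (U : Set ℂ) (hU : IsOpen U) (g f₁ f₂ : ℂ → ℂ)
    (hg : DifferentiableOn ℂ g U)
    (hf₁ : DifferentiableOn ℂ f₁ U) (hf₂ : DifferentiableOn ℂ f₂ U)
    (hrel : ∀ z ∈ U, f₁ z + (starRingEnd ℂ) (g z) * f₂ z = 0)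
    {z : ℂ} (hz : z ∈ U) :
    (starRingEnd ℂ) (deriv g z) * f₂ z = 0 := by
  have hnz : U ∈ nhds z := hU.mem_nhds hz
  have hgz : HasDerivAt g (deriv g z) z := (hg.differentiableAt hnz).hasDerivAt
  have hf₁z : HasDerivAt f₁ (deriv f₁ z) z := (hf₁.differentiableAt hnz).hasDerivAt
  have hf₂z : HasDerivAt f₂ (deriv f₂ z) z := (hf₂.differentiableAt hnz).hasDerivAt
  set a := deriv f₁ z
  set b := deriv g z
  set c := deriv f₂ z
  have Hf₁ : HasFDerivAt f₁ ((ContinuousLinearMap.smulRight (1 : ℂ →L[ℂ] ℂ) a).restrictScalars ℝ) z :=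
    hf₁z.hasFDerivAt.restrictScalars ℝ
  have Hf₂ : HasFDerivAt f₂ ((ContinuousLinearMap.smulRight (1 : ℂ →L[ℂ] ℂ) c).restrictScalars ℝ) z :=
    hf₂z.hasFDerivAt.restrictScalars ℝ
  have Hg : HasFDerivAt g ((ContinuousLinearMap.smulRight (1 : ℂ →L[ℂ] ℂ) b).restrictScalars ℝ) z :=
    hgz.hasFDerivAt.restrictScalars ℝ
  have Hconj : HasFDerivAt (fun w => (starRingEnd ℂ) (g w))
      ((conjCLE.toContinuousLinearMap).comp
        ((ContinuousLinearMap.smulRight (1 : ℂ →L[ℂ] ℂ) b).restrictScalars ℝ)) z :=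
    (conjCLE.toContinuousLinearMap.hasFDerivAt).comp z Hg
  have Hsum := Hf₁.add (Hconj.mul Hf₂)
  have Hzero : HasFDerivAt (fun w => f₁ w + (starRingEnd ℂ) (g w) * f₂ w)
      (0 : ℂ →L[ℝ] ℂ) z := by
    refine (hasFDerivAt_const (0:ℂ) z).congr_of_eventuallyEq ?_
    filter_upwards [hnz] with w hw using (hrel w hw)
  have hL := Hsum.unique Hzero
  have h1 := congrFun (congrArg DFunLike.coe hL) 1
  have hI := congrFun (congrArg DFunLike.coe hL) Complex.I
  simp [ContinuousLinearMap.smul_apply, Complex.conjCLE_apply, map_mul, Complex.conj_I,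
    smul_eq_mul, mul_comm] at h1 hI
  linear_combination (-Complex.I/2) * (Complex.I * h1 - hI) +
    ((starRingEnd ℂ) b * f₂ z) * Complex.I_sq

/-- On a connected open set `U ⊆ ℂ`, if `g` is holomorphic and
non-constant and `f₁, f₂` are holomorphic with `f₁(z) + conj(g(z)) f₂(z) = 0`
on `U`, then `f₁ ≡ 0` and `f₂ ≡ 0` on `U`. -/
theorem holomorphic_antiholomorphic_splitting (U : Set ℂ) (hU : IsOpen U)
    (hUconn : IsConnected U) (g f₁ f₂ : ℂ → ℂ)
    (hg : DifferentiableOn ℂ g U)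
    (hgnc : ∀ c : ℂ, ¬ Set.EqOn g (fun _ => c) U)
    (hf₁ : DifferentiableOn ℂ f₁ U) (hf₂ : DifferentiableOn ℂ f₂ U)
    (hrel : ∀ z ∈ U, f₁ z + (starRingEnd ℂ) (g z) * f₂ z = 0) :
    ∀ z ∈ U, f₁ z = 0 ∧ f₂ z = 0 := by
  have key : ∀ z ∈ U, (starRingEnd ℂ) (deriv g z) * f₂ z = 0 :=
    fun z hz => key_deriv_lemma U hU g f₁ f₂ hg hf₁ hf₂ hrel hz
  have hf₂0 : ∀ w ∈ U, f₂ w = 0 := by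
    intro w hw
    by_contra hne
    -- the set where f₂ ≠ 0 is open in U
    have hV : IsOpen (U ∩ f₂ ⁻¹' {0}ᶜ) :=
      hf₂.continuousOn.isOpen_inter_preimage hU isOpen_compl_singleton
    have hwV : w ∈ U ∩ f₂ ⁻¹' {0}ᶜ := ⟨hw, hne⟩
    obtain ⟨r, hr, hball⟩ := Metric.isOpen_iff.1 hV w hwV
    -- on the ball, deriv g = 0
    have hderiv0 : ∀ x ∈ Metric.ball w r, deriv g x = 0 := by
      intro x hx
      obtain ⟨hxU, hxf₂⟩ := hball hx
      have := key x hxU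
      rcases mul_eq_zero.1 this with h | h
      · simpa using congrArg (starRingEnd ℂ) h
      · exact absurd h hxf₂
    -- hence g is constant on the ball
    have hconst : ∀ x ∈ Metric.ball w r, g x = g w := by
      intro x hx
      refine (convex_ball w r).is_const_of_fderivWithin_eq_zero
        (hg.mono (fun y hy => (hball hy).1)) ?_ hx (Metric.mem_ball_self hr)
      intro y hy
      rw [fderivWithin_of_isOpen Metric.isOpen_ball hy]
      have hdy : DifferentiableAt ℂ g y := hg.differentiableAt (hU.mem_nhds (hball hy).1)
      have : HasDerivAt g 0 y := hderiv0 y hy ▸ hdy.hasDerivAt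
      have h0 : HasFDerivAt g (0 : ℂ →L[ℂ] ℂ) y := by
        have h := this.hasFDerivAt
        simpa using h
      exact h0.fderiv
    -- identity theorem: g is constant on U
    have hga : AnalyticOnNhd ℂ g U := hg.analyticOnNhd hU
    have hev : g =ᶠ[nhds w] (fun _ => g w) := by
      filter_upwards [Metric.ball_mem_nhds w hr] with x hx using hconst x hx
    have := hga.eqOn_of_preconnected_of_eventuallyEq
      (analyticOnNhd_const) hUconn.isPreconnected hw hev
    exact hgnc (g w) this
  intro z hz
  refine ⟨?_, hf₂0 z hz⟩
  have := hrel z hz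
  rw [hf₂0 z hz] at this
  simpa using this
end
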